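/- Let K be a field, q ∈ K* not a root of unity, and a ∈ K[h,h⁻¹] a nonzero non-invertible Laurent polynomial which is simple in the sense that there is no α ∈ K* with a(α) = a(qα) = 0. Then the quantum generalized Weyl algebra A(a(h),q) admits no K-algebra endomorphism ψ with ψ(h) ∈ K*. -/

import Mathlib

/-- Integer power of an element `h` of a ring, using a chosen "inverse" `h'` for
negative exponents. -/
noncomputable def zpowP {A : Type*} [Monoid A] (h h' : A) (i : ℤ) : A :=
  if 0 ≤ i then h ^ i.toNat else h' ^ (-i).toNat

/-- Evaluation of the Laurent polynomial `a(s·h) = Σ aᵢ sⁱ hⁱ` at an element `h`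
of a `K`-algebra with chosen inverse `h'`; here `a : ℤ →₀ K` records the
coefficients of `a`. -/
noncomputable def evalP {K A : Type*} [Field K] [Ring A] [Algebra K A]
    (a : ℤ →₀ K) (s : K) (h h' : A) : A :=
  a.sum fun i c => (c * s ^ i) • zpowP h h' i

/-- The defining relations of the quantum generalized Weyl algebra `A(a(h),q)`:
generators `x = ι 0`, `y = ι 1`, `h = ι 2`, `h⁻¹ = ι 3`, and relations
`xh = qhx`, `yh = q⁻¹hy`, `hh⁻¹ = h⁻¹h = 1`, `xy = a(qh)`, `yx = a(h)`. -/
inductive relG (K : Type*) [Field K] (q : K) (a : ℤ →₀ K) :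
    FreeAlgebra K (Fin 4) → FreeAlgebra K (Fin 4) → Prop
  | xh : relG K q a (FreeAlgebra.ι K 0 * FreeAlgebra.ι K 2)
      (q • (FreeAlgebra.ι K 2 * FreeAlgebra.ι K 0))
  | yh : relG K q a (FreeAlgebra.ι K 1 * FreeAlgebra.ι K 2)
      (q⁻¹ • (FreeAlgebra.ι K 2 * FreeAlgebra.ι K 1))
  | hinv : relG K q a (FreeAlgebra.ι K 2 * FreeAlgebra.ι K 3) 1
  | invh : relG K q a (FreeAlgebra.ι K 3 * FreeAlgebra.ι K 2) 1
  | xy : relG K q a (FreeAlgebra.ι K 0 * FreeAlgebra.ι K 1)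
      (evalP a q (FreeAlgebra.ι K 2) (FreeAlgebra.ι K 3))
  | yx : relG K q a (FreeAlgebra.ι K 1 * FreeAlgebra.ι K 0)
      (evalP a 1 (FreeAlgebra.ι K 2) (FreeAlgebra.ι K 3))

/-- The quantum generalized Weyl algebra `A(a(h),q)`. -/
abbrev GWA (K : Type*) [Field K] (q : K) (a : ℤ →₀ K) := RingQuot (relG K q a)

/-- The images of the generators `x, y, h, h⁻¹` in `A(a(h),q)`. -/
noncomputable def gwaGen (K : Type*) [Field K] (q : K) (a : ℤ →₀ K) (i : Fin 4) :
    GWA K q a :=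
  RingQuot.mkAlgHom K (relG K q a) (FreeAlgebra.ι K i)

/-! ### Auxiliary material: algebra homomorphisms and `evalP` -/

lemma map_evalP {K A B : Type*} [Field K] [Ring A] [Ring B] [Algebra K A] [Algebra K B]
    (f : A →ₐ[K] B) (a : ℤ →₀ K) (s : K) (h h' : A) :
    f (evalP a s h h') = evalP a s (f h) (f h') := by
  simp only [evalP, map_finsuppSum, map_smul, zpowP]
  refine Finsupp.sum_congr fun i _ => ?_
  split <;> simp [map_pow]

lemma evalP_scalar {K A : Type*} [Field K] [Ring A] [Algebra K A]
    (a : ℤ →₀ K) (s β : K) :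
    evalP a s (algebraMap K A β) (algebraMap K A β⁻¹) =
      algebraMap K A (a.sum fun i c => c * s ^ i * β ^ i) := by
  unfold evalP zpowP
  rw [map_finsuppSum]
  refine Finsupp.sum_congr fun i _ => ?_
  by_cases h : 0 ≤ i
  · rw [if_pos h, ← map_pow, Algebra.smul_def, ← map_mul]
    congr 1
    rw [← zpow_natCast β, Int.toNat_of_nonneg h]
  · rw [if_neg h, ← map_pow, Algebra.smul_def, ← map_mul]
    congr 1
    rw [← zpow_natCast β⁻¹, Int.toNat_of_nonneg (by omega), inv_zpow', neg_neg]

/-! ### A representation of the GWA on `ℤ →₀ K` -/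

section Rep

variable {K : Type*} [Field K]

/-- A weighted shift operator on `ℤ →₀ K`. -/
noncomputable def opT (σ : ℤ → ℤ) (f : ℤ → K) : Module.End K (ℤ →₀ K) :=
  Finsupp.lsum K fun n => f n • Finsupp.lsingle (σ n)

lemma opT_single (σ : ℤ → ℤ) (f : ℤ → K) (n : ℤ) (c : K) :
    opT σ f (Finsupp.single n c) = Finsupp.single (σ n) (f n * c) := by
  rw [opT, Finsupp.lsum_single, LinearMap.smul_apply, Finsupp.lsingle_apply,
    Finsupp.smul_single']

lemma opT_id_pow (f : ℤ → K) (m : ℕ) (n : ℤ) (c : K) :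
    (opT id f ^ m) (Finsupp.single n c) = Finsupp.single n (f n ^ m * c) := by
  induction m with
  | zero => simp
  | succ m ih =>
      rw [pow_succ', Module.End.mul_apply, ih, opT_single, id_eq, pow_succ']
      ring_nf

end Rep

section Rep2

variable {K : Type*} [Field K] (q : K) (a : ℤ →₀ K)

/-- Evaluation of the Laurent polynomial at a scalar. -/
noncomputable def lpEval (β : K) : K := a.sum fun i c => c * β ^ i

noncomputable def opH : Module.End K (ℤ →₀ K) := opT id fun n => q ^ n
noncomputable def opH' : Module.End K (ℤ →₀ K) := opT id fun n => q ^ (-n)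
noncomputable def opX : Module.End K (ℤ →₀ K) := opT (· - 1) fun _ => (1 : K)
noncomputable def opY : Module.End K (ℤ →₀ K) :=
  opT (· + 1) fun n => lpEval a (q ^ (n + 1))

lemma zpowP_opH (i n : ℤ) (c : K) :
    zpowP (opH q) (opH' q) i (Finsupp.single n c)
      = Finsupp.single n (q ^ (n * i) * c) := by
  unfold zpowP opH opH'
  by_cases h : 0 ≤ i
  · rw [if_pos h, opT_id_pow]
    congr 2
    rw [← zpow_natCast (q ^ n), ← zpow_mul, Int.toNat_of_nonneg h]
  · rw [if_neg h, opT_id_pow]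
    congr 2
    rw [← zpow_natCast (q ^ (-n)), ← zpow_mul, Int.toNat_of_nonneg (by omega)]
    ring_nf

lemma evalP_opH (s : K) (n : ℤ) (c : K) :
    evalP a s (opH q) (opH' q) (Finsupp.single n c)
      = Finsupp.single n (lpEval a (s * q ^ n) * c) := by
  unfold evalP lpEval
  rw [Finsupp.sum, Finsupp.sum, LinearMap.coe_sum, Finset.sum_apply,
    Finset.sum_mul, Finsupp.single_finset_sum]
  refine Finset.sum_congr rfl fun i _ => ?_
  rw [LinearMap.smul_apply, zpowP_opH, Finsupp.smul_single, mul_zpow, smul_eq_mul,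
    zpow_mul]
  ring_nf

end Rep2

section Rep3

variable (K : Type*) [Field K] (q : K) (a : ℤ →₀ K)

noncomputable def repφ : FreeAlgebra K (Fin 4) →ₐ[K] Module.End K (ℤ →₀ K) :=
  FreeAlgebra.lift K ![opX, opY q a, opH q, opH' q]

lemma repφ_rel (hq0 : q ≠ 0) : ∀ ⦃u v⦄, relG K q a u v → repφ K q a u = repφ K q a v := by
  intro u v h
  cases h with
  | xh =>
      simp only [repφ, map_mul, map_smul, FreeAlgebra.lift_ι_apply]
      show opX * opH q = q • (opH q * opX)
      apply Finsupp.lhom_ext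
      intro n c
      simp only [Module.End.mul_apply, LinearMap.smul_apply, opX, opH, opT_single,
        id_eq, one_mul, Finsupp.smul_single, smul_eq_mul]
      congr 1
      rw [← mul_assoc, mul_comm q (q ^ (n - 1)), ← zpow_add_one₀ hq0, sub_add_cancel]
  | yh =>
      simp only [repφ, map_mul, map_smul, FreeAlgebra.lift_ι_apply]
      show opY q a * opH q = q⁻¹ • (opH q * opY q a)
      apply Finsupp.lhom_ext
      intro n c
      simp only [Module.End.mul_apply, LinearMap.smul_apply, opY, opH, opT_single,
        id_eq, Finsupp.smul_single, smul_eq_mul]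
      congr 1
      rw [zpow_add_one₀ hq0]
      field_simp
  | hinv =>
      simp only [repφ, map_mul, map_one, FreeAlgebra.lift_ι_apply]
      show opH q * opH' q = 1
      apply Finsupp.lhom_ext
      intro n c
      simp only [Module.End.mul_apply, opH, opH', opT_single, id_eq,
        Module.End.one_apply]
      rw [← mul_assoc, ← zpow_add₀ hq0, add_neg_cancel, zpow_zero, one_mul]
  | invh =>
      simp only [repφ, map_mul, map_one, FreeAlgebra.lift_ι_apply]
      show opH' q * opH q = 1
      apply Finsupp.lhom_ext
      intro n c
      simp only [Module.End.mul_apply, opH, opH', opT_single, id_eq,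
        Module.End.one_apply]
      rw [← mul_assoc, ← zpow_add₀ hq0, neg_add_cancel, zpow_zero, one_mul]
  | xy =>
      rw [map_mul]
      refine Eq.trans ?_ (map_evalP (A := FreeAlgebra K (Fin 4)) (B := Module.End K (ℤ →₀ K)) (repφ K q a) a q (FreeAlgebra.ι K (2 : Fin 4))
        (FreeAlgebra.ι K (3 : Fin 4))).symm
      simp only [repφ, FreeAlgebra.lift_ι_apply]
      show opX * opY q a = evalP a q (opH q) (opH' q)
      apply Finsupp.lhom_ext
      intro n c
      rw [Module.End.mul_apply, evalP_opH]
      simp only [opX, opY, opT_single, one_mul, add_sub_cancel_right]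
      congr 2
      rw [mul_comm, ← zpow_add_one₀ hq0]
  | yx =>
      rw [map_mul]
      refine Eq.trans ?_ (map_evalP (A := FreeAlgebra K (Fin 4)) (B := Module.End K (ℤ →₀ K)) (repφ K q a) a 1 (FreeAlgebra.ι K (2 : Fin 4))
        (FreeAlgebra.ι K (3 : Fin 4))).symm
      simp only [repφ, FreeAlgebra.lift_ι_apply]
      show opY q a * opX = evalP a 1 (opH q) (opH' q)
      apply Finsupp.lhom_ext
      intro n c
      rw [Module.End.mul_apply, evalP_opH]
      simp only [opX, opY, opT_single, one_mul, sub_add_cancel, one_mul]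

noncomputable def gwaφ (hq0 : q ≠ 0) : GWA K q a →ₐ[K] Module.End K (ℤ →₀ K) :=
  RingQuot.liftAlgHom K ⟨repφ K q a, repφ_rel K q a hq0⟩

lemma algebraMap_gwa_inj (hq0 : q ≠ 0) (t : K)
    (ht : algebraMap K (GWA K q a) t = 0) : t = 0 := by
  have h1 : algebraMap K (Module.End K (ℤ →₀ K)) t = 0 := by
    have := congrArg (gwaφ K q a hq0) ht
    rwa [AlgHom.commutes, map_zero] at this
  have h2 := congrFun (congrArg DFunLike.coe h1) (Finsupp.single (0 : ℤ) (1 : K))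
  rw [Module.algebraMap_end_apply, LinearMap.zero_apply, Finsupp.smul_single,
    smul_eq_mul, mul_one] at h2
  exact (Finsupp.single_eq_zero).mp h2

end Rep3

/-- Let `q ∈ K*` not be a root of unity and `a` a nonzero non-invertible Laurent
polynomial (encoded by its coefficients `a : ℤ →₀ K`) which is simple in the sense
that there is no `α ∈ K*` with `a(α) = a(qα) = 0`.  Then `A(a(h),q)` admits no
`K`-algebra endomorphism `ψ` with `ψ(h)` a nonzero scalar. -/
theorem stmt_11 (K : Type*) [Field K] (q : K) (hq0 : q ≠ 0)
    (hq : ∀ n : ℤ, n ≠ 0 → q ^ n ≠ 1)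
    (a : ℤ →₀ K) (ha : a ≠ 0) (hainv : a.support.card ≠ 1)
    (hsimple : ¬ ∃ α : K, α ≠ 0 ∧ (a.sum fun i c => c * α ^ i) = 0 ∧
      (a.sum fun i c => c * (q * α) ^ i) = 0) :
    ¬ ∃ (ψ : GWA K q a →ₐ[K] GWA K q a) (α : K), α ≠ 0 ∧
      ψ (gwaGen K q a 2) = algebraMap K (GWA K q a) α := by
  rintro ⟨ψ, α, hα, hψh⟩
  have q1 : q ≠ 1 := fun h => hq 1 one_ne_zero (by simp [h])
  -- images of generators
  set Xg := gwaGen K q a 0 with hXg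
  set Yg := gwaGen K q a 1 with hYg
  set Hg := gwaGen K q a 2 with hHg
  set H'g := gwaGen K q a 3 with hH'g
  -- the defining relations in the quotient
  have rxh : Xg * Hg = q • (Hg * Xg) := by
    simpa [hXg, hHg, gwaGen, map_mul, map_smul] using
      RingQuot.mkAlgHom_rel K (relG.xh (K := K) (q := q) (a := a))
  have ryh : Yg * Hg = q⁻¹ • (Hg * Yg) := by
    simpa [hYg, hHg, gwaGen, map_mul, map_smul] using
      RingQuot.mkAlgHom_rel K (relG.yh (K := K) (q := q) (a := a))
  have rhh : Hg * H'g = 1 := by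
    simpa [hHg, hH'g, gwaGen, map_mul] using
      RingQuot.mkAlgHom_rel K (relG.hinv (K := K) (q := q) (a := a))
  have rxy : Xg * Yg = evalP a q Hg H'g := by
    have h := RingQuot.mkAlgHom_rel K (relG.xy (K := K) (q := q) (a := a))
    rw [map_mul] at h
    rw [hXg, hYg, hHg, hH'g, gwaGen, gwaGen, gwaGen, gwaGen, h]
    exact map_evalP (RingQuot.mkAlgHom K (relG K q a)) a q _ _
  have ryx : Yg * Xg = evalP a 1 Hg H'g := by
    have h := RingQuot.mkAlgHom_rel K (relG.yx (K := K) (q := q) (a := a))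
    rw [map_mul] at h
    rw [hXg, hYg, hHg, hH'g, gwaGen, gwaGen, gwaGen, gwaGen, h]
    exact map_evalP (RingQuot.mkAlgHom K (relG K q a)) a 1 _ _
  -- ψ kills a scalar multiple relation: generic helper
  have kill : ∀ (s : K), s ≠ 1 → ∀ z : GWA K q a,
      z * algebraMap K (GWA K q a) α = s • (algebraMap K (GWA K q a) α * z) → z = 0 := by
    intro s hs z hz
    rw [Algebra.commutes] at hz
    have h1s : (1 : K) - s ≠ 0 := sub_ne_zero.mpr (Ne.symm hs)
    have hz' : z * algebraMap K (GWA K q a) α =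
        algebraMap K (GWA K q a) s * (z * algebraMap K (GWA K q a) α) :=
      hz.trans (Algebra.smul_def s _)
    have h2 : algebraMap K (GWA K q a) ((1:K) - s) * (z * algebraMap K (GWA K q a) α) = 0 := by
      rw [map_sub, map_one, sub_mul, one_mul, ← hz', sub_self]
    have hu : z * algebraMap K (GWA K q a) α = 0 := by
      calc z * algebraMap K (GWA K q a) α
          = algebraMap K (GWA K q a) ((1:K) - s)⁻¹ *
            (algebraMap K (GWA K q a) ((1:K) - s) * (z * algebraMap K (GWA K q a) α)) := by
            rw [← mul_assoc, ← map_mul, inv_mul_cancel₀ h1s, map_one, one_mul]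
        _ = 0 := by rw [h2, mul_zero]
    calc z = z * algebraMap K (GWA K q a) α * algebraMap K (GWA K q a) α⁻¹ := by
            rw [mul_assoc, ← map_mul, mul_inv_cancel₀ hα, map_one, mul_one]
      _ = 0 := by rw [hu, zero_mul]
  -- ψ X = 0 and ψ Y = 0
  have hψX : ψ Xg = 0 := by
    apply kill q q1
    have e := congrArg ψ rxh
    rw [map_mul, map_smul, map_mul, hψh] at e
    exact e
  have hψY : ψ Yg = 0 := by
    apply kill q⁻¹ (by
      intro h
      exact q1 (by rw [← inv_inv q, h, inv_one]))
    have e := congrArg ψ ryh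
    rw [map_mul, map_smul, map_mul, hψh] at e
    exact e
  -- ψ H' = α⁻¹
  have hψH' : ψ H'g = algebraMap K (GWA K q a) α⁻¹ := by
    have e := congrArg ψ rhh
    rw [map_mul, map_one, hψh] at e
    calc ψ H'g = algebraMap K (GWA K q a) α⁻¹ *
          (algebraMap K (GWA K q a) α * ψ H'g) := by
          rw [← mul_assoc, ← map_mul, inv_mul_cancel₀ hα, map_one, one_mul]
      _ = algebraMap K (GWA K q a) α⁻¹ := by rw [e, mul_one]
  -- deduce a(qα) = 0
  have e1 : algebraMap K (GWA K q a) (a.sum fun i c => c * q ^ i * α ^ i) = 0 := by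
    have e := congrArg ψ rxy
    rw [map_mul, hψX, zero_mul, map_evalP, hψh, hψH', evalP_scalar] at e
    exact e.symm
  have e2 : algebraMap K (GWA K q a) (a.sum fun i c => c * 1 ^ i * α ^ i) = 0 := by
    have e := congrArg ψ ryx
    rw [map_mul, hψY, zero_mul, map_evalP, hψh, hψH', evalP_scalar] at e
    exact e.symm
  apply hsimple
  refine ⟨α, hα, ?_, ?_⟩
  · have := algebraMap_gwa_inj K q a hq0 _ e2
    rw [← this]
    exact Finsupp.sum_congr fun i _ => by rw [one_zpow, mul_one]
  · have := algebraMap_gwa_inj K q a hq0 _ e1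
    rw [← this]
    exact Finsupp.sum_congr fun i _ => by rw [mul_zpow, mul_assoc]
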